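/- Every polytope P = conv(X) with X finite admits a triangulation whose vertices all belong to X. -/

import Mathlib

open Geometry Set Finset

section Helpers

variable {E : Type*} [NormedAddCommGroup E] [NormedSpace ℝ E]

/-- `A` is fully visible from `a` with respect to the obstacle `conv Y`. -/
def Vis (a : E) (Y : Set E) (A : Set E) : Prop :=
  ∀ u ∈ convexHull ℝ A, ∀ p ∈ openSegment ℝ a u, p ∉ convexHull ℝ Y

lemma Vis.mono {a : E} {Y A B : Set E} (h : Vis a Y B) (hAB : A ⊆ B) : Vis a Y A :=
  fun u hu => h u (convexHull_mono hAB hu)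

lemma vis_empty (a : E) (Y : Set E) : Vis a Y (∅ : Set E) := by
  simp [Vis]

/-- First hit point of the segment from `a` to `y` on the compact convex set `conv Y`. -/
lemma firstHit {a : E} {Y : Set E} (hY : Y.Finite) (ha : a ∉ convexHull ℝ Y)
    {y z : E} (hy : y ∈ convexHull ℝ Y) (hz : z ∈ segment ℝ a y)
    (hz' : z ∉ convexHull ℝ Y) :
    ∃ y' ∈ convexHull ℝ Y, z ∈ segment ℝ a y' ∧
      ∀ p ∈ openSegment ℝ a y', p ∉ convexHull ℝ Y := by
  classical
  set L : ℝ →ᵃ[ℝ] E := AffineMap.lineMap a y with hL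
  have hLa : ∀ t : ℝ, (1 - t) • a + t • y = L t := by
    intro t; rw [hL, AffineMap.lineMap_apply_module]
  have hcont : Continuous fun t : ℝ => (1 - t) • a + t • y := by fun_prop
  set T : Set ℝ := {t | t ∈ Set.Icc (0:ℝ) 1 ∧ (1 - t) • a + t • y ∈ convexHull ℝ Y} with hT
  have hclosed : IsClosed T := by
    apply IsClosed.inter isClosed_Icc
    exact ((hY.isCompact_convexHull ℝ).isClosed).preimage hcont
  have h1T : (1:ℝ) ∈ T := ⟨⟨zero_le_one, le_refl 1⟩, by simpa using hy⟩
  have hTne : T.Nonempty := ⟨1, h1T⟩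
  have hbdd : BddBelow T := ⟨0, fun t ht => ht.1.1⟩
  set t0 : ℝ := sInf T with ht0
  have ht0T : t0 ∈ T := hclosed.csInf_mem hTne hbdd
  have ht0pos : 0 < t0 := by
    rcases lt_or_eq_of_le ht0T.1.1 with h | h
    · exact h
    · exfalso; apply ha; have := ht0T.2; rw [← h] at this; simpa using this
  have hTconv : Convex ℝ T := by
    have hpre : T = Set.Icc (0:ℝ) 1 ∩ ⇑L ⁻¹' (convexHull ℝ Y) := by
      ext t; simp [hT, hLa t]
    rw [hpre]
    exact Convex.inter (convex_Icc 0 1) ((convex_convexHull ℝ Y).affine_preimage L)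
  refine ⟨(1 - t0) • a + t0 • y, ht0T.2, ?_, ?_⟩
  · rw [segment_eq_image] at hz
    obtain ⟨s, hs, hzs⟩ := hz
    simp only at hzs
    have hslt : s < t0 := by
      by_contra hns
      push_neg at hns
      apply hz'
      have hsT : s ∈ T := by
        have hseg : s ∈ segment ℝ t0 1 := by
          rw [segment_eq_Icc ht0T.1.2]; exact ⟨hns, hs.2⟩
        exact hTconv.segment_subset ht0T h1T hseg
      rw [← hzs]
      exact hsT.2
    rw [segment_eq_image]
    refine ⟨s / t0, ⟨div_nonneg hs.1 ht0pos.le, (div_le_one ht0pos).2 hslt.le⟩, ?_⟩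
    simp only
    rw [← hzs]
    match_scalars <;> field_simp <;> ring_nf
  · intro p hp hpY
    rw [openSegment_eq_image] at hp
    obtain ⟨τ, hτ, hpτ⟩ := hp
    simp only at hpτ
    have hform : p = (1 - τ * t0) • a + (τ * t0) • y := by rw [← hpτ]; module
    have hmem : τ * t0 ∈ T := by
      refine ⟨⟨mul_nonneg hτ.1.le ht0pos.le, ?_⟩, by rw [← hform]; exact hpY⟩
      calc τ * t0 ≤ 1 * t0 := by nlinarith [hτ.2, ht0pos]
        _ = t0 := one_mul t0
        _ ≤ 1 := ht0T.1.2
    have : t0 ≤ τ * t0 := csInf_le hbdd hmem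
    nlinarith [hτ.1, hτ.2, ht0pos]

lemma triangle_q {a u u' y' p : E} {t μ : ℝ} (ht : t ∈ Set.Ioo (0:ℝ) 1)
    (hμ : μ ∈ Set.Ioo (0:ℝ) 1) (hy' : y' = t • u + (1 - t) • u')
    (hp : p = (1 - μ) • a + μ • u) :
    ∃ q ∈ segment ℝ p u', q ∈ openSegment ℝ a y' := by
  have hD : 0 < t + μ * (1 - t) := by nlinarith [ht.1, ht.2, hμ.1, hμ.2]
  set c : ℝ := μ / (t + μ * (1 - t)) with hc
  have hc0 : 0 < c := div_pos hμ.1 hD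
  have hc1 : c < 1 := by
    rw [hc, div_lt_one hD]; nlinarith [ht.1, hμ.2]
  set l : ℝ := c * (1 - t) with hl
  have hl0 : 0 ≤ l := mul_nonneg hc0.le (by nlinarith [ht.2])
  have hl1 : l ≤ 1 := by nlinarith [ht.1, ht.2]
  refine ⟨(1 - l) • p + l • u', ?_, ?_⟩
  · rw [segment_eq_image]
    exact ⟨l, ⟨hl0, hl1⟩, rfl⟩
  · rw [openSegment_eq_image]
    refine ⟨c, ⟨hc0, hc1⟩, ?_⟩
    simp only
    rw [hp, hy', hl, hc]
    match_scalars <;> field_simp <;> ring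

/-- If `y'` is a relative interior point of the simplex on `s` and the open segment from `a`
to `y'` misses `conv Y`, then the whole simplex is visible from `a`. -/
lemma vis_of_pos_weights {a : E} {Y : Set E} {s : Finset E} {w : E → ℝ}
    (hw0 : ∀ i ∈ s, 0 < w i) (hw1 : ∑ i ∈ s, w i = 1) {y' : E}
    (hy' : ∑ i ∈ s, w i • i = y') (hssub : (↑s : Set E) ⊆ convexHull ℝ Y)
    (hvis : ∀ p ∈ openSegment ℝ a y', p ∉ convexHull ℝ Y) :
    Vis a Y (↑s : Set E) := by
  classical
  intro u hu p hp hpY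
  rw [Finset.convexHull_eq] at hu
  obtain ⟨v, hv0, hv1, hvu⟩ := hu
  rw [Finset.centerMass_eq_of_sum_1 _ _ hv1] at hvu
  simp only [id] at hvu
  have hsne : s.Nonempty := by
    rcases Finset.eq_empty_or_nonempty s with h | h
    · exfalso; rw [h] at hw1; simp at hw1
    · exact h
  obtain ⟨i₀, hi₀s, hi₀⟩ := s.exists_min_image w hsne
  set m : ℝ := w i₀ with hm
  have hmpos : 0 < m := hw0 _ hi₀s
  set ε : ℝ := m / 2 with hε
  have hεpos : 0 < ε := by positivity
  have hvle : ∀ i ∈ s, v i ≤ 1 := by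
    intro i hi
    calc v i ≤ ∑ j ∈ s, v j := Finset.single_le_sum hv0 hi
      _ = 1 := hv1
  have hw'pos : ∀ i ∈ s, 0 < (1 + ε) * w i - ε * v i := by
    intro i hi
    have h1 : m ≤ w i := hi₀ i hi
    have h2 : v i ≤ 1 := hvle i hi
    nlinarith [hw0 i hi, hv0 i hi]
  set u' : E := ∑ i ∈ s, ((1 + ε) * w i - ε * v i) • i with hu'
  have hw'sum : ∑ i ∈ s, ((1 + ε) * w i - ε * v i) = 1 := by
    rw [Finset.sum_sub_distrib, ← Finset.mul_sum, ← Finset.mul_sum, hw1, hv1]; ring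
  have hu'conv : u' ∈ convexHull ℝ (↑s : Set E) := by
    rw [Finset.convexHull_eq]
    refine ⟨fun i => (1 + ε) * w i - ε * v i, fun i hi => (hw'pos i hi).le, hw'sum, ?_⟩
    rw [Finset.centerMass_eq_of_sum_1 _ _ hw'sum]
    simp [hu']
  set t : ℝ := ε / (1 + ε) with htdef
  have ht : t ∈ Set.Ioo (0:ℝ) 1 := by
    constructor
    · positivity
    · rw [htdef, div_lt_one (by positivity)]; linarith
  have hyform : y' = t • u + (1 - t) • u' := by
    rw [← hy', ← hvu, hu', Finset.smul_sum, Finset.smul_sum, ← Finset.sum_add_distrib]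
    refine Finset.sum_congr rfl fun i hi => ?_
    rw [smul_smul, smul_smul, ← add_smul]
    congr 1
    rw [htdef]
    field_simp
    ring
  rw [openSegment_eq_image] at hp
  obtain ⟨μ, hμ, hpμ⟩ := hp
  simp only at hpμ
  obtain ⟨q, hq1, hq2⟩ := triangle_q ht hμ hyform hpμ.symm
  have hsY : convexHull ℝ (↑s : Set E) ⊆ convexHull ℝ Y :=
    convexHull_min hssub (convex_convexHull ℝ Y)
  have hqY : q ∈ convexHull ℝ Y :=
    (convex_convexHull ℝ Y).segment_subset hpY (hsY hu'conv) hq1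
  exact hvis q hq2 hqY

/-- Every point of the space of a simplicial complex lies in the relative interior of some face. -/
lemma exists_face_pos_weights (K : SimplicialComplex ℝ E) {y' : E} (h : y' ∈ K.space) :
    ∃ s ∈ K.faces, ∃ w : E → ℝ,
      (∀ i ∈ s, 0 < w i) ∧ ∑ i ∈ s, w i = 1 ∧ ∑ i ∈ s, w i • i = y' := by
  classical
  rw [SimplicialComplex.mem_space_iff] at h
  obtain ⟨s₀, hs₀, hy₀⟩ := h
  have hex : ∃ n, ∃ s ∈ K.faces, y' ∈ convexHull ℝ (↑s : Set E) ∧ s.card = n :=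
    ⟨s₀.card, s₀, hs₀, hy₀, rfl⟩
  obtain ⟨s, hs, hys, hcard⟩ := Nat.find_spec hex
  rw [Finset.convexHull_eq] at hys
  obtain ⟨w, hw0, hw1, hwy⟩ := hys
  rw [Finset.centerMass_eq_of_sum_1 _ _ hw1] at hwy
  simp only [id] at hwy
  refine ⟨s, hs, w, ?_, hw1, hwy⟩
  by_contra hnot
  push_neg at hnot
  obtain ⟨i, his, hwi⟩ := hnot
  have hwi0 : w i = 0 := le_antisymm hwi (hw0 i his)
  set s' : Finset E := {j ∈ s | w j ≠ 0} with hs'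
  have hsub : s' ⊆ s := Finset.filter_subset _ _
  have hssub : s' ⊂ s := by
    refine Finset.ssubset_iff_of_subset hsub |>.2 ⟨i, his, ?_⟩
    simp [hs', hwi0]
  have hsum' : ∑ j ∈ s', w j = 1 := by
    rw [hs', Finset.sum_filter_ne_zero, hw1]
  have hys' : y' ∈ convexHull ℝ (↑s' : Set E) := by
    rw [Finset.convexHull_eq]
    refine ⟨w, fun j hj => (hw0 j (hsub hj)), hsum', ?_⟩
    rw [Finset.centerMass_eq_of_sum_1 _ _ hsum', ← hwy, hs']
    simp only [id]
    rw [Finset.sum_filter_of_ne]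
    intro j _ hj
    intro h0
    exact hj (by rw [h0, zero_smul])
  have hs'ne : s' ≠ ∅ := by
    intro h
    rw [h] at hys'
    simp at hys'
  have hs'face : s' ∈ K.faces := K.down_closed hs hsub (Finset.nonempty_iff_ne_empty.2 hs'ne)
  have hlt : s'.card < s.card := Finset.card_lt_card hssub
  rw [hcard] at hlt
  exact Nat.find_min hex hlt ⟨s', hs'face, hys', rfl⟩

lemma not_mem_affineSpan_of_vis {a : E} {Y : Set E} {s : Finset E} (hsne : s.Nonempty)
    (hvis : Vis a Y (↑s : Set E)) (hssub : (↑s : Set E) ⊆ convexHull ℝ Y) :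
    a ∉ affineSpan ℝ (↑s : Set E) := by
  classical
  intro hmem
  rw [← Subtype.range_coe (s := (↑s : Set E))] at hmem
  obtain ⟨fs, w, hw1, hwa⟩ := eq_affineCombination_of_mem_affineSpan hmem
  rw [affineCombination_eq_centerMass hw1, Finset.centerMass_eq_of_sum_1 _ _ hw1] at hwa
  set W : E → ℝ := fun x => ∑ i ∈ fs, if (i : E) = x then w i else 0 with hW
  have hWsum : ∑ x ∈ s, W x = 1 := by
    rw [hW]
    simp only
    rw [Finset.sum_comm, ← hw1]
    refine Finset.sum_congr rfl fun i _ => ?_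
    rw [Finset.sum_ite_eq]
    simp [Finset.mem_coe.mp i.2]
  have hWa : ∑ x ∈ s, W x • x = a := by
    rw [hW]
    simp only
    have : ∀ x ∈ s, (∑ i ∈ fs, if (i : E) = x then w i else 0) • x
        = ∑ i ∈ fs, if (i : E) = x then w i • x else 0 := by
      intro x _
      rw [Finset.sum_smul]
      exact Finset.sum_congr rfl fun i _ => by split_ifs <;> simp
    rw [Finset.sum_congr rfl this, Finset.sum_comm, hwa]
    refine Finset.sum_congr rfl fun i _ => ?_
    have : ∀ x ∈ s, (if (i : E) = x then w i • x else 0) =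
        (if (i : E) = x then w i • (i : E) else 0) := by
      intro x _; split_ifs with h <;> simp [h]
    rw [Finset.sum_congr rfl this, Finset.sum_ite_eq]
    simp [Finset.mem_coe.mp i.2]
  set n : ℝ := (s.card : ℝ) with hn
  have hnpos : 0 < n := by
    rw [hn]; exact_mod_cast Finset.card_pos.2 hsne
  set c : ℝ := 1 / n with hcdef
  have hcpos : 0 < c := by positivity
  set y : E := ∑ x ∈ s, c • x with hy
  have hysum : ∑ x ∈ s, c = 1 := by
    rw [Finset.sum_const, hcdef, nsmul_eq_mul]; field_simp; exact hn.symm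
  have hyconv : y ∈ convexHull ℝ (↑s : Set E) := by
    rw [Finset.convexHull_eq]
    exact ⟨fun _ => c, fun _ _ => hcpos.le, hysum,
      by rw [Finset.centerMass_eq_of_sum_1 _ _ hysum]; simp [hy]⟩
  set M : ℝ := 1 + s.sup' hsne fun x => |W x| with hM
  have hMbound : ∀ x ∈ s, |W x| ≤ M := by
    intro x hx
    have h1 : |W x| ≤ s.sup' hsne fun x => |W x| := Finset.le_sup' (fun x => |W x|) hx
    have h2 : (0:ℝ) ≤ s.sup' hsne fun x => |W x| := le_trans (abs_nonneg _) h1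
    rw [hM]; linarith
  have hMpos : 0 < M := by
    obtain ⟨x, hx⟩ := id hsne
    have h1 : |W x| ≤ s.sup' hsne fun x => |W x| := Finset.le_sup' (fun x => |W x|) hx
    have h2 : (0:ℝ) ≤ s.sup' hsne fun x => |W x| := le_trans (abs_nonneg _) h1
    rw [hM]; linarith
  set θ : ℝ := c / (2 * (c + M)) with hθ
  have hθpos : 0 < θ := by positivity
  have hθlt : θ < 1 := by
    rw [hθ, div_lt_one (by positivity)]; nlinarith
  have hcoef : ∀ x ∈ s, 0 ≤ θ * W x + (1 - θ) * c := by
    intro x hx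
    have h1 : -M ≤ W x := neg_le_of_abs_le (hMbound x hx)
    have h2 : θ * (c + M) = c / 2 := by rw [hθ]; field_simp
    nlinarith
  have hcoefsum : ∑ x ∈ s, (θ * W x + (1 - θ) * c) = 1 := by
    rw [Finset.sum_add_distrib, ← Finset.mul_sum, ← Finset.mul_sum, hWsum, hysum]; ring
  set q : E := ∑ x ∈ s, (θ * W x + (1 - θ) * c) • x with hq
  have hqconv : q ∈ convexHull ℝ (↑s : Set E) := by
    rw [Finset.convexHull_eq]
    exact ⟨fun x => θ * W x + (1 - θ) * c, fun x hx => hcoef x hx, hcoefsum,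
      by rw [Finset.centerMass_eq_of_sum_1 _ _ hcoefsum]; simp [hq]⟩
  have hqseg : q ∈ openSegment ℝ a y := by
    rw [openSegment_eq_image]
    refine ⟨1 - θ, ⟨by linarith, by linarith⟩, ?_⟩
    simp only
    have : (1 - (1 - θ)) • a + (1 - θ) • y = θ • a + (1 - θ) • y := by ring_nf
    rw [this, ← hWa, hy, Finset.smul_sum, Finset.smul_sum, ← Finset.sum_add_distrib, hq]
    refine Finset.sum_congr rfl fun x _ => ?_
    rw [smul_smul, smul_smul, ← add_smul]
  exact hvis y hyconv q hqseg (convexHull_min hssub (convex_convexHull ℝ Y) hqconv)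

/-- Insert a point outside the affine span into an affinely independent finset. -/
lemma affineIndependent_insert_finset [DecidableEq E] {s : Finset E} {a : E}
    (hs : AffineIndependent ℝ ((↑) : ↑s → E))
    (hspan : a ∉ affineSpan ℝ (↑s : Set E)) (has : a ∉ s) :
    AffineIndependent ℝ ((↑) : ↑(insert a s) → E) := by
  classical
  set i : ↑(insert a s) := ⟨a, Finset.mem_insert_self a s⟩ with hi
  apply AffineIndependent.affineIndependent_of_notMem_span (i := i)
  · have hne : ∀ x : {y : ↑(insert a s) // y ≠ i}, ((x : ↑(insert a s)) : E) ∈ s := by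
      rintro ⟨⟨b, hb⟩, hbi⟩
      rcases Finset.mem_insert.1 hb with h | h
      · exact absurd (Subtype.ext h) hbi
      · exact h
    set f : {y : ↑(insert a s) // y ≠ i} ↪ ↑s :=
      ⟨fun x => ⟨(x : ↑(insert a s)), hne x⟩, by
        rintro ⟨⟨b, hb⟩, hbne⟩ ⟨⟨c, hc⟩, hcne⟩ h
        simp only [Subtype.mk_eq_mk] at h
        subst h
        rfl⟩ with hf
    exact hs.comp_embedding f
  · have himg : ((↑) : ↑(insert a s) → E) '' {x | x ≠ i} = (↑s : Set E) := by
      ext b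
      constructor
      · rintro ⟨x, hx, rfl⟩
        rcases Finset.mem_insert.1 x.2 with h | h
        · exact absurd (Subtype.ext h) hx
        · exact h
      · intro hb
        have hba : b ≠ a := fun h => has (h ▸ hb)
        exact ⟨⟨b, Finset.mem_insert_of_mem hb⟩, fun h => hba (congrArg Subtype.val h), rfl⟩
    rw [himg]
    exact hspan

/-- Intersection of two cones over visible sets. -/
lemma cone_inter {a : E} {Y A B : Set E} (ha : a ∉ convexHull ℝ Y)
    (hA : Vis a Y A) (hB : Vis a Y B)
    (hAY : A ⊆ convexHull ℝ Y) (hBY : B ⊆ convexHull ℝ Y) {z : E}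
    (hzA : z ∈ convexHull ℝ (insert a A)) (hzB : z ∈ convexHull ℝ (insert a B)) :
    z = a ∨ ∃ y ∈ convexHull ℝ A ∩ convexHull ℝ B, z ∈ segment ℝ a y := by
  rcases A.eq_empty_or_nonempty with rfl | hAne
  · left; simpa using hzA
  rcases B.eq_empty_or_nonempty with rfl | hBne
  · left; simpa using hzB
  rw [convexHull_insert hAne, convexJoin_singleton_left] at hzA
  rw [convexHull_insert hBne, convexJoin_singleton_left] at hzB
  obtain ⟨y, hy, hzy⟩ := Set.mem_iUnion₂.1 hzA
  obtain ⟨w, hw, hzw⟩ := Set.mem_iUnion₂.1 hzB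
  have hyY : y ∈ convexHull ℝ Y := convexHull_min hAY (convex_convexHull ℝ Y) hy
  have hwY : w ∈ convexHull ℝ Y := convexHull_min hBY (convex_convexHull ℝ Y) hw
  rw [segment_eq_image] at hzy hzw
  obtain ⟨α, hα, hzα⟩ := hzy
  obtain ⟨β, hβ, hzβ⟩ := hzw
  simp only at hzα hzβ
  rcases eq_or_lt_of_le hα.1 with hα0 | hα0
  · left; rw [← hzα, ← hα0]; simp
  rcases eq_or_lt_of_le hβ.1 with hβ0 | hβ0
  · left; rw [← hzβ, ← hβ0]; simp
  have heq : (1 - α) • a + α • y = (1 - β) • a + β • w := by rw [hzα, hzβ]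
  have hkey : ∀ {α' β' : ℝ} {y' w' : E} {C : Set E}, 0 < α' → α' ≤ 1 → 0 < β' → β' ≤ 1 →
      y' ∈ convexHull ℝ Y → Vis a Y C → y' ∈ convexHull ℝ C → w' ∈ convexHull ℝ Y →
      (1 - α') • a + α' • y' = (1 - β') • a + β' • w' → ¬ α' < β' := by
    intro α' β' y' w' C hα'0 hα'1 hβ'0 hβ'1 hy'Y hvisA hy'A hw'Y heq' hlt
    have hβ'ne : β' ≠ 0 := hβ'0.ne'
    have hw'eq : w' = (1 - α'/β') • a + (α'/β') • y' := by
      have h2 : β' • w' = (β' - α') • a + α' • y' := by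
        have h3 : (1 - β') • a + β' • w' - (1 - α') • a = (1 - α') • a + α' • y' - (1-α') • a := by
          rw [← heq']
        calc β' • w' = (1 - β') • a + β' • w' - (1 - α') • a - (α' - β') • a := by module
          _ = (1 - α') • a + α' • y' - (1-α') • a - (α' - β') • a := by rw [h3]
          _ = (β' - α') • a + α' • y' := by module
      calc w' = (β'⁻¹ * β') • w' := by rw [inv_mul_cancel₀ hβ'ne, one_smul]
        _ = β'⁻¹ • (β' • w') := by rw [mul_smul]
        _ = β'⁻¹ • ((β' - α') • a + α' • y') := by rw [h2]
        _ = (1 - α'/β') • a + (α'/β') • y' := by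
            match_scalars <;> field_simp
    have hw'seg : w' ∈ openSegment ℝ a y' := by
      rw [openSegment_eq_image]
      refine ⟨α'/β', ⟨by positivity, by rw [div_lt_one hβ'0]; exact hlt⟩, hw'eq.symm⟩
    exact hvisA y' hy'A w' hw'seg hw'Y
  have hαβ : α = β := by
    rcases lt_trichotomy α β with h | h | h
    · exact absurd h (hkey hα0 hα.2 hβ0 hβ.2 hyY hA hy hwY heq)
    · exact h
    · exact absurd h (hkey hβ0 hβ.2 hα0 hα.2 hwY hB hw hyY heq.symm)
  have hyw : y = w := by
    subst hαβ
    have h2 : α • y = α • w := by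
      have h3 : (1 - α) • a + α • y - (1 - α) • a = (1 - α) • a + α • w - (1 - α) • a := by
        rw [heq]
      simpa using h3
    exact smul_right_injective E hα0.ne' h2
  right
  refine ⟨y, ⟨hy, hyw ▸ hw⟩, ?_⟩
  rw [segment_eq_image]
  exact ⟨α, ⟨hα.1, hα.2⟩, hzα⟩

/-- The one-point simplicial complex. -/
def pointComplex (a : E) : Geometry.SimplicialComplex ℝ E where
  faces := {{a}}
  isRelLowerSet_faces := by
    intro s hs
    simp only [Set.mem_singleton_iff] at hs
    subst hs
    refine ⟨Finset.singleton_nonempty a, fun t hts ht => ?_⟩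
    rcases Finset.subset_singleton_iff.1 hts with h | h
    · exact absurd h ht.ne_empty
    · exact h
  indep := by
    intro s hs
    simp only [Set.mem_singleton_iff] at hs
    subst hs
    haveI : Subsingleton ((({a} : Finset E) : Type _)) :=
      ⟨fun x y => Subtype.ext (by
        have hx := x.2; have hy := y.2
        simp only [Finset.mem_singleton] at hx hy
        rw [hx, hy])⟩
    exact affineIndependent_of_subsingleton ℝ _
  inter_subset_convexHull := by
    intro s t hs ht
    simp only [Set.mem_singleton_iff] at hs ht
    subst hs; subst ht
    simp

lemma pointComplex_space (a : E) : (pointComplex a).space = {a} := by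
  simp [Geometry.SimplicialComplex.space, pointComplex]

lemma pointComplex_vertices (a : E) : (pointComplex a).vertices = {a} := by
  ext x
  simp [Geometry.SimplicialComplex.vertices, pointComplex, Finset.singleton_inj]

/-- The empty simplicial complex. -/
def emptyComplex : Geometry.SimplicialComplex ℝ E where
  faces := ∅
  isRelLowerSet_faces := fun _ hs => absurd hs (Set.notMem_empty _)
  indep := fun hs => absurd hs (Set.notMem_empty _)
  inter_subset_convexHull := fun hs _ => absurd hs (Set.notMem_empty _)

/-- Constructor in the old field layout. -/
abbrev mkSC (faces : Set (Finset E)) (not_empty_mem : ∅ ∉ faces)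
    (indep : ∀ {s}, s ∈ faces → AffineIndependent ℝ ((↑) : s → E))
    (down_closed : ∀ {s t}, s ∈ faces → t ⊆ s → t ≠ ∅ → t ∈ faces)
    (inter_subset_convexHull : ∀ {s t}, s ∈ faces → t ∈ faces →
      convexHull ℝ ↑s ∩ convexHull ℝ ↑t ⊆ convexHull ℝ (s ∩ t : Set E)) :
    Geometry.SimplicialComplex ℝ E where
  faces := faces
  isRelLowerSet_faces := fun _ hs => ⟨Finset.nonempty_iff_ne_empty.2 (fun h => not_empty_mem (h ▸ hs)),
    fun _ hts htne => down_closed hs hts htne.ne_empty⟩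
  indep := indep
  inter_subset_convexHull := inter_subset_convexHull

/-- The key step: add a point outside the hull, coning over the visible part. -/
lemma step [DecidableEq E] {Y : Set E} (hY : Y.Finite) (hYne : Y.Nonempty) {a : E}
    (ha : a ∉ convexHull ℝ Y) (K : Geometry.SimplicialComplex ℝ E) (hfin : K.faces.Finite)
    (hsp : K.space = convexHull ℝ Y) (hver : K.vertices ⊆ Y) :
    ∃ K' : Geometry.SimplicialComplex ℝ E, K'.faces.Finite ∧
      K'.space = convexHull ℝ (insert a Y) ∧ K'.vertices ⊆ insert a Y := by
  classical
  have hfaceY : ∀ s ∈ K.faces, (↑s : Set E) ⊆ Y := by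
    intro s hs x hx
    exact hver (K.down_closed hs (Finset.singleton_subset_iff.2 hx) (Finset.singleton_nonempty x))
  have hfaceYc : ∀ s ∈ K.faces, (↑s : Set E) ⊆ convexHull ℝ Y :=
    fun s hs => (hfaceY s hs).trans (subset_convexHull ℝ Y)
  have hfacehull : ∀ s ∈ K.faces, convexHull ℝ (↑s : Set E) ⊆ convexHull ℝ Y :=
    fun s hs => convexHull_min (hfaceYc s hs) (convex_convexHull ℝ Y)
  have hanots : ∀ s ∈ K.faces, a ∉ s := by
    intro s hs h
    exact ha (hfaceYc s hs h)
  set S : Set (Finset E) := {s | (s ∈ K.faces ∨ s = ∅) ∧ Vis a Y (↑s : Set E)} with hS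
  have hScoe : ∀ s ∈ S, (↑s : Set E) ⊆ convexHull ℝ Y := by
    rintro s ⟨h | rfl, -⟩
    · exact hfaceYc s h
    · simp
  have haS : ∀ s ∈ S, a ∉ s := by
    rintro s ⟨h | rfl, -⟩ hmem
    · exact hanots s h hmem
    · simp at hmem
  set Fnew : Set (Finset E) := K.faces ∪ (fun s => insert a s) '' S with hF
  -- the old-new intersection property
  have oldnew : ∀ s ∈ K.faces, ∀ t0 ∈ S,
      convexHull ℝ (↑s : Set E) ∩ convexHull ℝ (↑(insert a t0) : Set E) ⊆
        convexHull ℝ ((↑s : Set E) ∩ ↑(insert a t0)) := by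
    rintro s hs t0 ht0 z ⟨hzs, hzt⟩
    have hzY : z ∈ convexHull ℝ Y := hfacehull s hs hzs
    rcases Finset.eq_empty_or_nonempty t0 with rfl | ht0ne
    · exfalso
      apply ha
      have : (↑(insert a (∅ : Finset E)) : Set E) = {a} := by simp
      rw [this, convexHull_singleton] at hzt
      rwa [hzt] at hzY
    · have ht0face : t0 ∈ K.faces := by
        rcases ht0.1 with h | rfl
        · exact h
        · exact absurd rfl ht0ne.ne_empty
      rw [Finset.coe_insert,
        convexHull_insert (Finset.coe_nonempty.2 ht0ne), convexJoin_singleton_left] at hzt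
      obtain ⟨w, hw, hzw⟩ := Set.mem_iUnion₂.1 hzt
      rw [← insert_endpoints_openSegment] at hzw
      rcases hzw with rfl | hzw
      · exact absurd hzY ha
      rcases hzw with rfl | hzw
      · have hmem := K.inter_subset_convexHull hs ht0face ⟨hzs, hw⟩
        refine convexHull_mono ?_ hmem
        rintro x ⟨hx1, hx2⟩
        exact ⟨hx1, Finset.mem_coe.2 (Finset.mem_insert_of_mem (Finset.mem_coe.1 hx2))⟩
      · exact absurd hzY (ht0.2 w hw z hzw)
  refine ⟨mkSC Fnew ?_ ?_ ?_ ?_, ?_, ?_, ?_⟩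
  · -- not_empty_mem
    rintro (h | ⟨s0, -, h⟩)
    · exact K.empty_notMem h
    · exact Finset.insert_ne_empty a s0 (by simpa using h)
  · -- indep
    rintro s (hs | ⟨s0, hs0, rfl⟩)
    · exact K.indep hs
    · show AffineIndependent ℝ ((↑) : ↑(insert a s0) → E)
      rcases Finset.eq_empty_or_nonempty s0 with rfl | hs0ne
      · have : insert a (∅ : Finset E) = {a} := rfl
        rw [this]
        haveI : Subsingleton ((({a} : Finset E) : Type _)) :=
          ⟨fun x y => Subtype.ext (by
            have hx := x.2; have hy := y.2
            simp only [Finset.mem_singleton] at hx hy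
            rw [hx, hy])⟩
        exact affineIndependent_of_subsingleton ℝ _
      · have hs0face : s0 ∈ K.faces := by
          rcases hs0.1 with h | rfl
          · exact h
          · exact absurd rfl hs0ne.ne_empty
        exact affineIndependent_insert_finset (K.indep hs0face)
          (not_mem_affineSpan_of_vis hs0ne hs0.2 (hfaceYc s0 hs0face)) (hanots s0 hs0face)
  · -- down_closed
    rintro s t (hs | ⟨s0, hs0, rfl⟩) hts htne
    · exact Or.inl (K.down_closed hs hts (Finset.nonempty_iff_ne_empty.2 htne))
    · by_cases hat : a ∈ t
      · set t' : Finset E := t.erase a with ht'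
        have htins : t = insert a t' := (Finset.insert_erase hat).symm
        have ht's0 : t' ⊆ s0 := by
          intro x hx
          have hxa : x ≠ a := Finset.ne_of_mem_erase hx
          have : x ∈ insert a s0 := hts (Finset.mem_of_mem_erase hx)
          rcases Finset.mem_insert.1 this with h | h
          · exact absurd h hxa
          · exact h
        rcases Finset.eq_empty_or_nonempty t' with ht'e | ht'ne
        · right
          refine ⟨∅, ⟨Or.inr rfl, by simpa using vis_empty a Y⟩, ?_⟩
          rw [htins, ht'e]
        · have hs0face : s0 ∈ K.faces := by
            rcases hs0.1 with h | rfl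
            · exact h
            · exact absurd (Finset.subset_empty.1 ht's0) ht'ne.ne_empty
          right
          refine ⟨t', ⟨Or.inl (K.down_closed hs0face ht's0 ht'ne),
            hs0.2.mono (Finset.coe_subset.2 ht's0)⟩, htins.symm⟩
      · have hts0 : t ⊆ s0 := by
          intro x hx
          rcases Finset.mem_insert.1 (hts hx) with h | h
          · exact absurd (h ▸ hx) hat
          · exact h
        have hs0face : s0 ∈ K.faces := by
          rcases hs0.1 with h | rfl
          · exact h
          · exact absurd (Finset.subset_empty.1 hts0) htne
        exact Or.inl (K.down_closed hs0face hts0 (Finset.nonempty_iff_ne_empty.2 htne))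
  · -- inter_subset_convexHull
    rintro s t (hs | ⟨s0, hs0, rfl⟩) (ht | ⟨t0, ht0, rfl⟩)
    · exact K.inter_subset_convexHull hs ht
    · exact oldnew s hs t0 ht0
    · intro z hz
      have := oldnew t ht s0 hs0 ⟨hz.2, hz.1⟩
      refine convexHull_mono ?_ this
      rintro x ⟨hx1, hx2⟩
      exact ⟨hx2, hx1⟩
    · rintro z ⟨hz1, hz2⟩
      rw [Finset.coe_insert] at hz1 hz2
      have hamem : a ∈ convexHull ℝ ((↑(insert a s0) : Set E) ∩ ↑(insert a t0)) := by
        apply subset_convexHull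
        exact ⟨Finset.mem_coe.2 (Finset.mem_insert_self a s0),
          Finset.mem_coe.2 (Finset.mem_insert_self a t0)⟩
      rcases cone_inter ha hs0.2 ht0.2 (hScoe s0 hs0) (hScoe t0 ht0) hz1 hz2 with
        rfl | ⟨y, ⟨hyA, hyB⟩, hzseg⟩
      · exact hamem
      · rcases Finset.eq_empty_or_nonempty s0 with rfl | hs0ne
        · simp at hyA
        rcases Finset.eq_empty_or_nonempty t0 with rfl | ht0ne
        · simp at hyB
        have hs0face : s0 ∈ K.faces := by
          rcases hs0.1 with h | rfl
          · exact h
          · exact absurd rfl hs0ne.ne_empty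
        have ht0face : t0 ∈ K.faces := by
          rcases ht0.1 with h | rfl
          · exact h
          · exact absurd rfl ht0ne.ne_empty
        have hy' : y ∈ convexHull ℝ ((↑s0 : Set E) ∩ ↑t0) :=
          K.inter_subset_convexHull hs0face ht0face ⟨hyA, hyB⟩
        have hsub : ((↑s0 : Set E) ∩ ↑t0) ⊆ ((↑(insert a s0) : Set E) ∩ ↑(insert a t0)) := by
          rintro x ⟨hx1, hx2⟩
          exact ⟨Finset.mem_coe.2 (Finset.mem_insert_of_mem (Finset.mem_coe.1 hx1)),
            Finset.mem_coe.2 (Finset.mem_insert_of_mem (Finset.mem_coe.1 hx2))⟩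
        exact (convex_convexHull ℝ _).segment_subset hamem (convexHull_mono hsub hy') hzseg
  · -- finiteness
    apply Set.Finite.union hfin
    apply Set.Finite.image
    exact (hfin.union (Set.finite_singleton ∅)).subset (fun s hs => by
      rcases hs.1 with h | h
      · exact Or.inl h
      · exact Or.inr (by simp [h]))
  · -- space
    apply subset_antisymm
    · apply Set.iUnion₂_subset
      rintro s (hs | ⟨s0, hs0, rfl⟩)
      · exact (hfacehull s hs).trans (convexHull_mono (Set.subset_insert a Y))
      · rw [Finset.coe_insert]
        apply convexHull_mono
        apply Set.insert_subset_insert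
        rcases hs0.1 with h | rfl
        · exact hfaceY s0 h
        · simp
    · intro z hz
      rw [convexHull_insert hYne, convexJoin_singleton_left] at hz
      obtain ⟨y, hy, hzseg⟩ := Set.mem_iUnion₂.1 hz
      by_cases hzY : z ∈ convexHull ℝ Y
      · have hzsp : z ∈ K.space := hsp ▸ hzY
        rw [SimplicialComplex.mem_space_iff] at hzsp ⊢
        obtain ⟨s, hs, hzs⟩ := hzsp
        exact ⟨s, Or.inl hs, hzs⟩
      · obtain ⟨y', hy'Y, hzseg', hvis'⟩ := firstHit hY ha hy hzseg hzY
        have hy'sp : y' ∈ K.space := hsp ▸ hy'Y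
        obtain ⟨s, hs, w, hw0, hw1, hwy⟩ := exists_face_pos_weights K hy'sp
        have hy's : y' ∈ convexHull ℝ (↑s : Set E) := by
          rw [Finset.convexHull_eq]
          refine ⟨w, fun i hi => (hw0 i hi).le, hw1, ?_⟩
          rw [Finset.centerMass_eq_of_sum_1 _ _ hw1]
          simpa using hwy
        have hvisS : Vis a Y (↑s : Set E) :=
          vis_of_pos_weights hw0 hw1 hwy (hfaceYc s hs) hvis'
        rw [SimplicialComplex.mem_space_iff]
        refine ⟨insert a s, Or.inr ⟨s, ⟨Or.inl hs, hvisS⟩, rfl⟩, ?_⟩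
        rw [Finset.coe_insert]
        have hamem : a ∈ convexHull ℝ (insert a (↑s : Set E)) :=
          subset_convexHull ℝ _ (Set.mem_insert a _)
        have hymem : y' ∈ convexHull ℝ (insert a (↑s : Set E)) :=
          convexHull_mono (Set.subset_insert a _) hy's
        exact (convex_convexHull ℝ _).segment_subset hamem hymem hzseg'
  · -- vertices
    intro x hx
    rcases hx with hx | ⟨s0, -, hx⟩
    · exact Set.mem_insert_of_mem a (hver hx)
    · have : a ∈ ({x} : Finset E) := hx ▸ Finset.mem_insert_self a s0
      rw [Finset.mem_singleton] at this
      rw [← this]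
      exact Set.mem_insert a Y

end Helpers

/-- Every polytope `P = conv(X)` with `X` finite admits a triangulation all of whose vertices
belong to `X`: there is a finite geometric simplicial complex whose union is `P` and whose
vertex set is contained in `X`. -/
theorem stmt9 {d : ℕ} (X : Set (EuclideanSpace ℝ (Fin d))) (hX : X.Finite) :
    ∃ K : Geometry.SimplicialComplex ℝ (EuclideanSpace ℝ (Fin d)),
      K.faces.Finite ∧ K.space = convexHull ℝ X ∧ K.vertices ⊆ X := by
  classical
  refine Set.Finite.induction_on
    (motive := fun X _ => ∃ K : Geometry.SimplicialComplex ℝ (EuclideanSpace ℝ (Fin d)),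
      K.faces.Finite ∧ K.space = convexHull ℝ X ∧ K.vertices ⊆ X) X hX ?_ ?_
  · refine ⟨emptyComplex, by simp [emptyComplex], ?_, ?_⟩
    · simp [Geometry.SimplicialComplex.space, emptyComplex]
    · intro x hx
      exact absurd hx (by simp [Geometry.SimplicialComplex.vertices, emptyComplex])
  · intro a Y haY hYfin ih
    obtain ⟨K, hfin, hsp, hver⟩ := ih
    by_cases hahull : a ∈ convexHull ℝ Y
    · have heq : convexHull ℝ (insert a Y) = convexHull ℝ Y := by
        apply le_antisymm
        · exact convexHull_min (Set.insert_subset hahull (subset_convexHull ℝ Y))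
            (convex_convexHull ℝ Y)
        · exact convexHull_mono (Set.subset_insert a Y)
      exact ⟨K, hfin, by rw [heq, hsp], fun x hx => Set.mem_insert_of_mem a (hver hx)⟩
    · rcases Y.eq_empty_or_nonempty with rfl | hYne
      · refine ⟨pointComplex a, by simp [pointComplex], ?_, ?_⟩
        · rw [pointComplex_space]
          simp
        · rw [pointComplex_vertices]
          simp
      · obtain ⟨K', h1, h2, h3⟩ := step hYfin hYne hahull K hfin hsp hver
        exact ⟨K', h1, h2, h3⟩
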